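/- Let a < b be real numbers, 1 < α < 2, and let q : [a,b] → ℝ be continuous. Suppose u : [a,b] → ℝ is continuously differentiable with u' absolutely continuous on [a,b], twice differentiable on (a,b), u(a) = u(b) = 0, u(t) ≠ 0 for almost every t ∈ (a,b), and (t−a)^{2−α}·u''(t) + q(t)·u(t) = 0 for all t ∈ (a,b). Then ∫_a^b |q(s)|·(s−a)^{α−2} ds ≥ 4/(b−a). -/

import Mathlib

open Set Filter Topology MeasureTheory intervalIntegral

set_option maxHeartbeats 800000 in
/-- Lyapunov-type inequality for the conformable Dirichlet problem: if
`(t-a)^(2-α) u'' + q u = 0` on `(a,b)` has a nontrivial solution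
`u ∈ AC²[a,b]` (C¹ with `u'` absolutely continuous, encoded via the FTC for
`u''`) with `u(a) = u(b) = 0` and `u ≠ 0` a.e. on `(a,b)`, then
`∫_a^b |q(s)| (s-a)^(α-2) ds ≥ 4/(b-a)`. -/
theorem lyapunov_inequality_conformable
    (a b α : ℝ) (hab : a < b) (hα1 : 1 < α) (hα2 : α < 2)
    (q u u' u'' : ℝ → ℝ)
    (hq : ContinuousOn q (Set.Icc a b))
    (hu' : ∀ t ∈ Set.Icc a b, HasDerivWithinAt u (u' t) (Set.Icc a b) t)
    (hu'cont : ContinuousOn u' (Set.Icc a b))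
    (hint : IntervalIntegrable u'' volume a b)
    (hFTC : ∀ c ∈ Set.Icc a b, ∀ d ∈ Set.Icc a b, u' d - u' c = ∫ s in c..d, u'' s)
    (hu'' : ∀ t ∈ Set.Ioo a b, HasDerivAt u' (u'' t) t)
    (ha : u a = 0) (hb : u b = 0)
    (hne : ∀ᵐ t ∂(volume.restrict (Set.Ioo a b)), u t ≠ 0)
    (heq : ∀ t ∈ Set.Ioo a b, (t - a) ^ (2 - α) * u'' t + q t * u t = 0) :
    4 / (b - a) ≤ ∫ s in a..b, |q s| * (s - a) ^ (α - 2) := by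
  have hba : (0:ℝ) < b - a := sub_pos.mpr hab
  -- u is continuous on [a,b]
  have hucont : ContinuousOn u (Set.Icc a b) := fun t ht => (hu' t ht).continuousWithinAt
  -- max point of |u|
  obtain ⟨c, hc, hcmax⟩ := isCompact_Icc.exists_isMaxOn (nonempty_Icc.mpr hab.le)
    (continuous_abs.comp_continuousOn hucont)
  set M := |u c| with hM
  have hMb : ∀ t ∈ Set.Icc a b, |u t| ≤ M := hcmax
  -- M > 0
  have hMpos : 0 < M := by
    have hres : volume.restrict (Set.Ioo a b) ≠ 0 := by
      rw [Ne, Measure.restrict_eq_zero]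
      simp [Real.volume_Ioo, hab, hba.ne']
    have : (ae (volume.restrict (Set.Ioo a b))).NeBot := ae_neBot.mpr hres
    obtain ⟨t, htne, htIoo⟩ := (hne.and (ae_restrict_mem measurableSet_Ioo)).exists
    have := hMb t (Ioo_subset_Icc_self htIoo)
    have : 0 < |u t| := abs_pos.mpr htne
    linarith [hMb t (Ioo_subset_Icc_self htIoo)]
  have hucne : u c ≠ 0 := by
    intro h; rw [hM, h] at hMpos; simp at hMpos
  have hcIoo : c ∈ Set.Ioo a b := by
    rcases hc with ⟨h1, h2⟩
    constructor
    · rcases h1.lt_or_eq with h | h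
      · exact h
      · exact absurd (h ▸ ha) hucne
    · rcases h2.lt_or_eq with h | h
      · exact h
      · exact absurd (h.symm ▸ hb) hucne
  obtain ⟨hac, hcb⟩ := hcIoo
  -- derivatives at interior points
  have huD : ∀ t ∈ Set.Ioo a b, HasDerivAt u (u' t) t := fun t ht =>
    (hu' t (Ioo_subset_Icc_self ht)).hasDerivAt (Icc_mem_nhds ht.1 ht.2)
  -- integrability pieces
  have hint1 : IntervalIntegrable (fun τ => (τ - a) * u'' τ) volume a c := by
    apply IntervalIntegrable.continuousOn_mul
    · exact hint.mono_set (by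
        rw [uIcc_of_le hac.le, uIcc_of_le hab.le]
        exact Icc_subset_Icc le_rfl hcb.le)
    · exact (continuous_id.sub continuous_const).continuousOn
  have hint2 : IntervalIntegrable (fun τ => (b - τ) * u'' τ) volume c b := by
    apply IntervalIntegrable.continuousOn_mul
    · exact hint.mono_set (by
        rw [uIcc_of_le hcb.le, uIcc_of_le hab.le]
        exact Icc_subset_Icc hac.le le_rfl)
    · exact (continuous_const.sub continuous_id).continuousOn
  -- FTC identities
  have key1 : (∫ τ in a..c, (τ - a) * u'' τ) = (c - a) * u' c - u c := by
    have hFc : ContinuousOn (fun τ => (τ - a) * u' τ - u τ) (Set.Icc a c) := by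
      apply ContinuousOn.sub
      · exact ((continuous_id.sub continuous_const).continuousOn).mul
          (hu'cont.mono (Icc_subset_Icc le_rfl hcb.le))
      · exact hucont.mono (Icc_subset_Icc le_rfl hcb.le)
    have hFd : ∀ τ ∈ Set.Ioo a c, HasDerivAt (fun τ => (τ - a) * u' τ - u τ)
        ((τ - a) * u'' τ) τ := by
      intro τ hτ
      have hτ' : τ ∈ Set.Ioo a b := ⟨hτ.1, hτ.2.trans hcb⟩
      have h1 := (((hasDerivAt_id τ).sub_const a).mul (hu'' τ hτ')).sub (huD τ hτ')
      simp only [id_eq] at h1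
      exact h1.congr_deriv (by ring)
    have := intervalIntegral.integral_eq_sub_of_hasDerivAt_of_le hac.le hFc hFd hint1
    rw [this, ha]; ring
  have key2 : (∫ τ in c..b, (b - τ) * u'' τ) = -((b - c) * u' c) - u c := by
    have hGc : ContinuousOn (fun τ => (b - τ) * u' τ + u τ) (Set.Icc c b) := by
      apply ContinuousOn.add
      · exact ((continuous_const.sub continuous_id).continuousOn).mul
          (hu'cont.mono (Icc_subset_Icc hac.le le_rfl))
      · exact hucont.mono (Icc_subset_Icc hac.le le_rfl)
    have hGd : ∀ τ ∈ Set.Ioo c b, HasDerivAt (fun τ => (b - τ) * u' τ + u τ)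
        ((b - τ) * u'' τ) τ := by
      intro τ hτ
      have hτ' : τ ∈ Set.Ioo a b := ⟨hac.trans hτ.1, hτ.2⟩
      have h1 := (((hasDerivAt_id τ).const_sub b).mul (hu'' τ hτ')).add (huD τ hτ')
      simp only [id_eq] at h1
      exact h1.congr_deriv (by ring)
    have := intervalIntegral.integral_eq_sub_of_hasDerivAt_of_le hcb.le hGc hGd hint2
    rw [this, hb]; ring
  set I1 := ∫ τ in a..c, (τ - a) * u'' τ with hI1
  set I2 := ∫ τ in c..b, (b - τ) * u'' τ with hI2
  have hkey : (b - c) * I1 + (c - a) * I2 = -((b - a) * u c) := by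
    rw [key1, key2]; ring
  -- integrability of |u''|
  have habs : IntervalIntegrable (fun τ => |u'' τ|) volume a b := hint.abs
  have habs1 : IntervalIntegrable (fun τ => |u'' τ|) volume a c :=
    habs.mono_set (by
      rw [uIcc_of_le hac.le, uIcc_of_le hab.le]
      exact Icc_subset_Icc le_rfl hcb.le)
  have habs2 : IntervalIntegrable (fun τ => |u'' τ|) volume c b :=
    habs.mono_set (by
      rw [uIcc_of_le hcb.le, uIcc_of_le hab.le]
      exact Icc_subset_Icc hac.le le_rfl)
  -- bounds on I1, I2
  have hb1 : |I1| ≤ (c - a) * ∫ τ in a..c, |u'' τ| := by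
    calc |I1| ≤ ∫ τ in a..c, |(τ - a) * u'' τ| :=
          intervalIntegral.abs_integral_le_integral_abs hac.le
      _ ≤ ∫ τ in a..c, (c - a) * |u'' τ| := by
          apply intervalIntegral.integral_mono_on hac.le hint1.abs (habs1.const_mul _)
          intro τ hτ
          rw [abs_mul, abs_of_nonneg (by linarith [hτ.1] : (0:ℝ) ≤ τ - a)]
          exact mul_le_mul_of_nonneg_right (by linarith [hτ.2]) (abs_nonneg _)
      _ = (c - a) * ∫ τ in a..c, |u'' τ| := intervalIntegral.integral_const_mul _ _
  have hb2 : |I2| ≤ (b - c) * ∫ τ in c..b, |u'' τ| := by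
    calc |I2| ≤ ∫ τ in c..b, |(b - τ) * u'' τ| :=
          intervalIntegral.abs_integral_le_integral_abs hcb.le
      _ ≤ ∫ τ in c..b, (b - c) * |u'' τ| := by
          apply intervalIntegral.integral_mono_on hcb.le hint2.abs (habs2.const_mul _)
          intro τ hτ
          rw [abs_mul, abs_of_nonneg (by linarith [hτ.2] : (0:ℝ) ≤ b - τ)]
          exact mul_le_mul_of_nonneg_right (by linarith [hτ.1]) (abs_nonneg _)
      _ = (b - c) * ∫ τ in c..b, |u'' τ| := intervalIntegral.integral_const_mul _ _
  have hadd : (∫ τ in a..c, |u'' τ|) + (∫ τ in c..b, |u'' τ|) = ∫ τ in a..b, |u'' τ| :=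
    intervalIntegral.integral_add_adjacent_intervals habs1 habs2
  have habsnn1 : 0 ≤ ∫ τ in a..c, |u'' τ| :=
    intervalIntegral.integral_nonneg hac.le (fun τ _ => abs_nonneg _)
  have habsnn2 : 0 ≤ ∫ τ in c..b, |u'' τ| :=
    intervalIntegral.integral_nonneg hcb.le (fun τ _ => abs_nonneg _)
  -- main bound: (b-a) M ≤ (b-c)(c-a) ∫ |u''|
  have hmain : (b - a) * M ≤ (b - c) * (c - a) * ∫ τ in a..b, |u'' τ| := by
    have h1 : (b - a) * M = |(b - c) * I1 + (c - a) * I2| := by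
      rw [hkey, abs_neg, abs_mul, abs_of_nonneg hba.le]
    rw [h1]
    calc |(b - c) * I1 + (c - a) * I2| ≤ (b - c) * |I1| + (c - a) * |I2| := by
          refine (abs_add_le _ _).trans ?_
          rw [abs_mul, abs_mul, abs_of_nonneg (by linarith : (0:ℝ) ≤ b - c),
            abs_of_nonneg (by linarith : (0:ℝ) ≤ c - a)]
      _ ≤ (b - c) * ((c - a) * ∫ τ in a..c, |u'' τ|)
            + (c - a) * ((b - c) * ∫ τ in c..b, |u'' τ|) := by
          gcongr <;> linarith
      _ = (b - c) * (c - a) * ((∫ τ in a..c, |u'' τ|) + ∫ τ in c..b, |u'' τ|) := by ring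
      _ = (b - c) * (c - a) * ∫ τ in a..b, |u'' τ| := by rw [hadd]
  -- integrability of RHS integrand
  have hrpow : IntervalIntegrable (fun s => (s - a) ^ (α - 2)) volume a b := by
    have h0 := (intervalIntegrable_rpow' (a := 0) (b := b - a)
      (show (-1:ℝ) < α - 2 by linarith)).comp_sub_right a
    simpa using h0
  have hqint : IntervalIntegrable (fun s => |q s| * (s - a) ^ (α - 2)) volume a b := by
    apply hrpow.continuousOn_mul
    rw [uIcc_of_le hab.le]; exact hq.abs
  have hMqint : IntervalIntegrable (fun s => M * (|q s| * (s - a) ^ (α - 2))) volume a b :=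
    hqint.const_mul M
  -- pointwise bound |u''| ≤ M |q| (s-a)^(α-2) a.e. on [a,b]
  have haebound : (fun τ => |u'' τ|) ≤ᵐ[volume.restrict (Set.Icc a b)]
      fun s => M * (|q s| * (s - a) ^ (α - 2)) := by
    rw [← Measure.restrict_congr_set Ioo_ae_eq_Icc]
    filter_upwards [ae_restrict_mem measurableSet_Ioo] with t ht
    have hta : (0:ℝ) < t - a := by linarith [ht.1]
    have h1 := heq t ht
    have h2 : u'' t = -(q t * u t) * (t - a) ^ (α - 2) := by
      have hne0 : (t - a) ^ (2 - α) ≠ 0 := (Real.rpow_pos_of_pos hta _).ne'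
      have hprod : (t - a) ^ (2 - α) * (t - a) ^ (α - 2) = 1 := by
        rw [← Real.rpow_add hta]; norm_num
      have h3 : u'' t = ((t - a) ^ (2 - α) * u'' t) * (t - a) ^ (α - 2) := by
        rw [mul_comm ((t - a) ^ (2 - α)) (u'' t), mul_assoc, hprod, mul_one]
      have h4 : (t - a) ^ (2 - α) * u'' t = -(q t * u t) := by linarith
      rw [h3, h4]
    rw [h2, abs_mul, abs_neg, abs_mul,
      abs_of_nonneg (Real.rpow_nonneg hta.le _)]
    have := hMb t (Ioo_subset_Icc_self ht)
    have hrnn : (0:ℝ) ≤ (t - a) ^ (α - 2) := Real.rpow_nonneg hta.le _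
    calc |q t| * |u t| * (t - a) ^ (α - 2) ≤ |q t| * M * (t - a) ^ (α - 2) := by
          exact mul_le_mul_of_nonneg_right
            (mul_le_mul_of_nonneg_left this (abs_nonneg _)) hrnn
      _ = M * (|q t| * (t - a) ^ (α - 2)) := by ring
  have hint_le : (∫ τ in a..b, |u'' τ|) ≤ M * ∫ s in a..b, |q s| * (s - a) ^ (α - 2) := by
    have := intervalIntegral.integral_mono_ae_restrict hab.le habs hMqint haebound
    rwa [intervalIntegral.integral_const_mul] at this
  set J := ∫ s in a..b, |q s| * (s - a) ^ (α - 2) with hJ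
  have hJnn : 0 ≤ J := by
    apply intervalIntegral.integral_nonneg hab.le
    intro s hs
    exact mul_nonneg (abs_nonneg _) (Real.rpow_nonneg (by linarith [hs.1]) _)
  -- conclude
  have hfinal : (b - a) * M ≤ (b - a) ^ 2 / 4 * (M * J) := by
    calc (b - a) * M ≤ (b - c) * (c - a) * ∫ τ in a..b, |u'' τ| := hmain
      _ ≤ (b - c) * (c - a) * (M * J) := by
          apply mul_le_mul_of_nonneg_left hint_le
          nlinarith
      _ ≤ (b - a) ^ 2 / 4 * (M * J) := by
          apply mul_le_mul_of_nonneg_right (by nlinarith [sq_nonneg (b + a - 2 * c)])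
            (by positivity)
  rw [div_le_iff₀ hba]
  nlinarith [hfinal, hMpos, hJnn, mul_pos hba hMpos]
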